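/- arXiv:2002.06985 — 4 statements merged into one kernel-verified Lean document; each statement's English description precedes it below -/
import Mathlib

section
/- Let 1 ≤ s ≤ d and let k_1, …, k_s be linearly independent vectors in ℝ^d with |k_j| ≤ K for all j, for some K > 0. Let Vol(k_1,…,k_s) denote the s-dimensional volume of the parallelepiped with sides k_1,…,k_s. Then for any vector w in the span of k_1,…,k_s, writing α = max_j |w·k_j|, one has ‖w‖ ≤ s K^{s-1} α / Vol(k_1,…,k_s). -/
open scoped RealInnerProductSpace

open Finset Matrix

variable {d : ℕ}

local notation "E" => EuclideanSpace ℝ (Fin d)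

/-- dot-Gram computation -/
lemma dot_gram {n : ℕ} (v : Fin n → E) (x y : Fin n → ℝ) :
    x ⬝ᵥ (Matrix.of fun i j => ⟪v i, v j⟫).mulVec y
      = ⟪∑ i, x i • v i, ∑ j, y j • v j⟫ := by
  rw [sum_inner]
  simp only [dotProduct, Matrix.mulVec, dotProduct, Matrix.of_apply,
    real_inner_smul_left, inner_sum, real_inner_smul_right]
  congr 1; ext i
  rw [Finset.mul_sum]
  congr 1; ext j
  ring

lemma gram_congr {n : ℕ} (v : Fin n → E) (C : Matrix (Fin n) (Fin n) ℝ) :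
    (Matrix.of fun i j => ⟪∑ l, C i l • v l, ∑ l, C j l • v l⟫)
      = C * (Matrix.of fun i j => ⟪v i, v j⟫) * Cᵀ := by
  ext i j
  have h := dot_gram v (C i) (C j)
  simp only [Matrix.of_apply] at h ⊢
  rw [← h]
  simp only [Matrix.mul_apply, dotProduct, Matrix.mulVec, dotProduct,
    Matrix.of_apply, Matrix.transpose_apply, Finset.mul_sum]
  simp only [Finset.sum_mul, mul_assoc]
  rw [Finset.sum_comm]

lemma gram_det_le {n : ℕ} : ∀ (v : Fin n → E),
    0 ≤ (Matrix.of fun i j => ⟪v i, v j⟫).det ∧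
      (Matrix.of fun i j => ⟪v i, v j⟫).det ≤ ∏ i, ‖v i‖ ^ 2 := by
  induction n with
  | zero => intro v; simp [Matrix.det_fin_zero]
  | succ n ih =>
    intro v
    set G : Matrix (Fin (n+1)) (Fin (n+1)) ℝ := Matrix.of fun i j => ⟪v i, v j⟫ with hG
    set Kk : Submodule ℝ E := Submodule.span ℝ (Set.range fun i : Fin n => v i.castSucc)
      with hKk
    haveI : FiniteDimensional ℝ Kk := FiniteDimensional.span_of_finite ℝ (Set.finite_range _)
    set p : E := (Kk.orthogonalProjectionOnto (v (Fin.last n)) : E) with hp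
    obtain ⟨c, hc⟩ := (Submodule.mem_span_range_iff_exists_fun ℝ).1
      (Kk.orthogonalProjectionOnto (v (Fin.last n))).2
    set u : E := v (Fin.last n) - p with hu
    have hup : u ∈ Kkᗮ := Submodule.sub_starProjection_mem_orthogonal (K := Kk) _
    have hinner : ∀ i : Fin n, ⟪u, v i.castSucc⟫ = 0 := by
      intro i
      rw [real_inner_comm]
      exact (Submodule.mem_orthogonal Kk u).1 hup _
        (Submodule.subset_span (Set.mem_range_self i))
    have hpu : ⟪p, u⟫ = 0 :=
      (Submodule.mem_orthogonal Kk u).1 hup p (Kk.orthogonalProjectionOnto (v (Fin.last n))).2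
    have hvpu : v (Fin.last n) = p + u := by rw [hu]; abel
    have hnorm : ‖u‖ ^ 2 ≤ ‖v (Fin.last n)‖ ^ 2 := by
      rw [hvpu, norm_add_sq_real, hpu]
      nlinarith [sq_nonneg ‖p‖]
    set C : Matrix (Fin (n+1)) (Fin (n+1)) ℝ :=
      Fin.snoc (fun i => Pi.single i.castSucc 1) (Fin.snoc (fun j => -c j) 1) with hC
    set w' : Fin (n+1) → E := fun i => ∑ l, C i l • v l with hw'
    have hw1 : ∀ i : Fin n, w' i.castSucc = v i.castSucc := by
      intro i
      simp only [hw', hC, Fin.snoc_castSucc]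
      simp [Pi.single_apply, ite_smul]
    have hw2 : w' (Fin.last n) = u := by
      simp only [hw', hC, Fin.snoc_last]
      rw [Fin.sum_univ_castSucc]
      simp only [Fin.snoc_castSucc, Fin.snoc_last, one_smul, neg_smul]
      rw [Finset.sum_neg_distrib]
      rw [hu, hp, ← hc]
      abel
    set G' : Matrix (Fin (n+1)) (Fin (n+1)) ℝ := Matrix.of fun i j => ⟪w' i, w' j⟫ with hG'
    have hdetC : C.det = 1 := by
      rw [Matrix.det_of_lowerTriangular C ?_]
      · rw [Finset.prod_eq_one]
        intro i _
        refine Fin.lastCases ?_ ?_ i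
        · simp [hC]
        · intro j; simp [hC]
      · intro i j hij
        simp only [OrderDual.toDual_lt_toDual] at hij
        have hij' : (i : ℕ) < (j : ℕ) := hij
        rcases Fin.eq_castSucc_or_eq_last i with ⟨i₀, rfl⟩ | rfl
        · simp only [hC, Fin.snoc_castSucc]
          rw [Pi.single_apply, if_neg]
          intro h
          rw [h] at hij'
          simp at hij'
        · exact absurd hij' (by have := j.isLt; simp [Fin.last]; omega)
    have hGG' : G'.det = G.det := by
      have h2 := gram_congr v C
      rw [hG']
      simp only [hw']
      rw [h2, Matrix.det_mul, Matrix.det_mul, hdetC, Matrix.det_transpose, hdetC, hG]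
      ring
    have hzero : ∀ j : Fin n, G' (Fin.last n) j.castSucc = 0 := by
      intro j
      simp only [hG', Matrix.of_apply, hw2, hw1]
      exact hinner j
    have hexp : G'.det
        = ‖u‖ ^ 2 * (Matrix.of fun i j : Fin n => ⟪v i.castSucc, v j.castSucc⟫).det := by
      rw [Matrix.det_succ_row G' (Fin.last n), Fin.sum_univ_castSucc,
        Finset.sum_eq_zero (fun j (_ : j ∈ Finset.univ) => by rw [hzero j]; ring)]
      have hsub : G'.submatrix (Fin.last n).succAbove (Fin.last n).succAbove
          = Matrix.of fun i j : Fin n => ⟪v i.castSucc, v j.castSucc⟫ := by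
        ext i j
        simp only [Matrix.submatrix_apply, Fin.succAbove_last, hG', Matrix.of_apply, hw1]
      have hll : G' (Fin.last n) (Fin.last n) = ‖u‖ ^ 2 := by
        simp only [hG', Matrix.of_apply, hw2]
        exact real_inner_self_eq_norm_sq u
      have hsign : (-1 : ℝ) ^ ((Fin.last n : ℕ) + (Fin.last n : ℕ)) = 1 :=
        Even.neg_one_pow ⟨n, rfl⟩
      rw [hsub, hll, hsign]
      ring
    obtain ⟨ih0, ih1⟩ := ih (fun i => v i.castSucc)
    constructor
    · rw [← hGG', hexp]
      exact mul_nonneg (sq_nonneg _) ih0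
    · rw [← hGG', hexp, Fin.prod_univ_castSucc]
      calc ‖u‖ ^ 2 * (Matrix.of fun i j : Fin n => ⟪v i.castSucc, v j.castSucc⟫).det
          ≤ ‖v (Fin.last n)‖ ^ 2 * ∏ i : Fin n, ‖v i.castSucc‖ ^ 2 :=
            mul_le_mul hnorm ih1 ih0 (sq_nonneg _)
        _ = (∏ i : Fin n, ‖v i.castSucc‖ ^ 2) * ‖v (Fin.last n)‖ ^ 2 := mul_comm _ _

lemma posdef_diag_nonneg {n : ℕ} {M : Matrix (Fin n) (Fin n) ℝ} (hM : M.PosDef) (i : Fin n) :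
    0 ≤ M i i := by
  have h := hM.posSemidef.dotProduct_mulVec_nonneg (Pi.single i 1)
  simpa [Matrix.mulVec_single, single_dotProduct] using h

lemma posdef_entry_sq {n : ℕ} {M : Matrix (Fin n) (Fin n) ℝ} (hM : M.PosDef) (i j : Fin n) :
    (M i j) ^ 2 ≤ M i i * M j j := by
  have hsym : M j i = M i j := by
    have h := congrFun (congrFun hM.1 i) j
    simpa using h
  have key : ∀ t : ℝ, 0 ≤ M i i * (t * t) + (2 * M i j) * t + M j j := by
    intro t
    have h := hM.posSemidef.dotProduct_mulVec_nonneg (t • (Pi.single i (1:ℝ) : Fin n → ℝ) + (Pi.single j (1:ℝ) : Fin n → ℝ))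
    simp only [star_trivial, Matrix.mulVec_add, Matrix.mulVec_smul, Matrix.mulVec_single,
      dotProduct_add, add_dotProduct, smul_dotProduct,
      single_dotProduct, smul_eq_mul, Pi.add_apply, Pi.smul_apply, mul_one,
      MulOpposite.op_one, one_smul, Matrix.col_apply, one_mul] at h
    rw [hsym] at h; linarith
  have hd := discrim_le_zero key
  rw [discrim] at hd
  nlinarith [hd]

/-- Giorgilli's parallelepiped lemma: if `k 1, …, k s` are linearly independent
vectors in `ℝ^d` of norm at most `K`, `w` lies in their span and
`α` is the maximum of `|w · k j|`, then
`‖w‖ ≤ s K^{s-1} α / Vol(k_1,…,k_s)`, where the volume of the parallelepiped is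
the square root of the Gram determinant. -/
theorem parallelepiped_estimate
    (d s : ℕ) (hs1 : 1 ≤ s) (hsd : s ≤ d) (K : ℝ) (hK : 0 < K)
    (k : Fin s → EuclideanSpace ℝ (Fin d))
    (hind : LinearIndependent ℝ k)
    (hKbound : ∀ j, ‖k j‖ ≤ K)
    (w : EuclideanSpace ℝ (Fin d))
    (hw : w ∈ Submodule.span ℝ (Set.range k))
    (α : ℝ)
    (hα : α = ⨆ j : Fin s, |⟪w, k j⟫|) :
    ‖w‖ ≤ s * K ^ (s - 1) * α /
      Real.sqrt ((Matrix.of fun i j : Fin s => ⟪k i, k j⟫).det) := by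
  obtain ⟨m, rfl⟩ : ∃ m, s = m + 1 := ⟨s - 1, (Nat.succ_pred_eq_of_pos hs1).symm⟩
  set G : Matrix (Fin (m+1)) (Fin (m+1)) ℝ := Matrix.of fun i j => ⟪k i, k j⟫ with hG
  have hherm : G.IsHermitian := by
    ext i j
    simp only [Matrix.conjTranspose_apply, hG, Matrix.of_apply, star_trivial]
    exact real_inner_comm _ _
  have hpos : G.PosDef := by
    refine Matrix.PosDef.of_dotProduct_mulVec_pos hherm fun x hx => ?_
    have hne : ∑ i, x i • k i ≠ 0 := by
      intro h
      exact hx (funext fun i => Fintype.linearIndependent_iff.1 hind x h i)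
    have hd := dot_gram k x x
    calc (0:ℝ) < ‖∑ i, x i • k i‖ ^ 2 := pow_pos (norm_pos_iff.2 hne) 2
      _ = ⟪∑ i, x i • k i, ∑ j, x j • k j⟫ := (real_inner_self_eq_norm_sq _).symm
      _ = star x ⬝ᵥ G *ᵥ x := by rw [← hd, star_trivial, hG]
  have hdet : 0 < G.det := hpos.det_pos
  have hunit : IsUnit G.det := hdet.ne'.isUnit
  have hinvpos : G⁻¹.PosDef := hpos.inv
  set B : ℝ := (K ^ m) ^ 2 / G.det with hB
  have hB0 : 0 ≤ B := div_nonneg (sq_nonneg _) hdet.le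
  have hminor : ∀ i : Fin (m+1),
      (Matrix.of fun a b : Fin m => ⟪k (i.succAbove a), k (i.succAbove b)⟫).det
        ≤ (K ^ m) ^ 2 := by
    intro i
    calc (Matrix.of fun a b : Fin m => ⟪k (i.succAbove a), k (i.succAbove b)⟫).det
        ≤ ∏ a : Fin m, ‖k (i.succAbove a)‖ ^ 2 := (gram_det_le _).2
      _ ≤ ∏ _a : Fin m, K ^ 2 := Finset.prod_le_prod (fun a _ => sq_nonneg _)
          (fun a _ => pow_le_pow_left₀ (norm_nonneg _) (hKbound _) 2)
      _ = (K ^ m) ^ 2 := by rw [Finset.prod_const, Finset.card_univ, Fintype.card_fin,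
          ← pow_mul, ← pow_mul, mul_comm]
  have hadj : ∀ i, Matrix.adjugate G i i ≤ (K ^ m) ^ 2 := by
    intro i
    rw [Matrix.adjugate_apply, Matrix.det_succ_row _ i,
      Finset.sum_eq_single i (fun j _ hj => by
        rw [Matrix.updateRow_self, Pi.single_apply, if_neg hj]; ring)
      (fun h => absurd (Finset.mem_univ i) h)]
    rw [Matrix.updateRow_self, Pi.single_apply, if_pos rfl,
      Matrix.submatrix_updateRow_succAbove]
    have hsu : G.submatrix i.succAbove i.succAbove
        = Matrix.of fun a b : Fin m => ⟪k (i.succAbove a), k (i.succAbove b)⟫ := by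
      ext a b
      simp [hG]
    have hsig : (-1 : ℝ) ^ ((i : ℕ) + (i : ℕ)) = 1 := Even.neg_one_pow ⟨i, rfl⟩
    rw [hsu, hsig]
    simpa using hminor i
  have hdiag : ∀ i, G⁻¹ i i ≤ B := by
    intro i
    have hGi : G⁻¹ = (G.det)⁻¹ • G.adjugate := by
      rw [Matrix.inv_def, Ring.inverse_eq_inv']
    calc G⁻¹ i i = (G.det)⁻¹ * Matrix.adjugate G i i := by rw [hGi]; simp
      _ ≤ (G.det)⁻¹ * (K ^ m) ^ 2 :=
          mul_le_mul_of_nonneg_left (hadj i) (inv_nonneg.2 hdet.le)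
      _ = B := by rw [hB, div_eq_mul_inv, mul_comm]
  have hdiag0 : ∀ i, 0 ≤ G⁻¹ i i := posdef_diag_nonneg hinvpos
  have hentry : ∀ i j, |G⁻¹ i j| ≤ B := by
    intro i j
    have h1 := posdef_entry_sq hinvpos i j
    have h2 : (G⁻¹ i j) ^ 2 ≤ B ^ 2 := by nlinarith [hdiag i, hdiag j, hdiag0 i, hdiag0 j]
    calc |G⁻¹ i j| = Real.sqrt ((G⁻¹ i j) ^ 2) := (Real.sqrt_sq_eq_abs _).symm
      _ ≤ Real.sqrt (B ^ 2) := Real.sqrt_le_sqrt h2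
      _ = B := Real.sqrt_sq hB0
  obtain ⟨c, hc⟩ := (Submodule.mem_span_range_iff_exists_fun ℝ).1 hw
  set b : Fin (m+1) → ℝ := fun i => ⟪w, k i⟫ with hb
  have hGc : G *ᵥ c = b := by
    ext i
    simp only [hb, Matrix.mulVec, dotProduct, hG, Matrix.of_apply]
    rw [← hc, sum_inner]
    refine Finset.sum_congr rfl fun j _ => ?_
    rw [real_inner_smul_left, real_inner_comm]
    ring
  have hcGi : c = G⁻¹ *ᵥ b := by
    rw [← hGc, Matrix.mulVec_mulVec, Matrix.nonsing_inv_mul G hunit, Matrix.one_mulVec]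
  have hbα : ∀ i, |b i| ≤ α := by
    intro i
    rw [hα, hb]
    exact le_ciSup (f := fun j : Fin (m+1) => |⟪w, k j⟫|)
      (Set.Finite.bddAbove (Set.finite_range _)) i
  have hα0 : 0 ≤ α := le_trans (abs_nonneg (b 0)) (hbα 0)
  have hcB : ∀ i, |c i| ≤ (m+1 : ℝ) * (B * α) := by
    intro i
    rw [hcGi]
    calc |(G⁻¹ *ᵥ b) i| = |∑ j, G⁻¹ i j * b j| := by
          simp [Matrix.mulVec, dotProduct]
      _ ≤ ∑ j, |G⁻¹ i j * b j| := Finset.abs_sum_le_sum_abs _ _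
      _ ≤ ∑ _j : Fin (m+1), B * α := Finset.sum_le_sum fun j _ => by
          rw [abs_mul]
          exact mul_le_mul (hentry i j) (hbα j) (abs_nonneg _) hB0
      _ = (m+1 : ℝ) * (B * α) := by
          rw [Finset.sum_const, Finset.card_univ, Fintype.card_fin, nsmul_eq_mul]
          push_cast
          ring
  have hwsq : ‖w‖ ^ 2 = ∑ i, c i * b i := by
    rw [← real_inner_self_eq_norm_sq, ← hc, ← dot_gram k c c, ← hG, hGc]
    simp [dotProduct]
  have hfin : ‖w‖ ^ 2 ≤ (m+1 : ℝ) ^ 2 * B * α ^ 2 := by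
    rw [hwsq]
    calc ∑ i, c i * b i ≤ ∑ i, |c i| * |b i| := Finset.sum_le_sum fun i _ => by
          rw [← abs_mul]; exact le_abs_self _
      _ ≤ ∑ _i : Fin (m+1), ((m+1 : ℝ) * (B * α)) * α := Finset.sum_le_sum fun i _ =>
          mul_le_mul (hcB i) (hbα i) (abs_nonneg _)
            (by positivity)
      _ = (m+1 : ℝ) ^ 2 * B * α ^ 2 := by
          rw [Finset.sum_const, Finset.card_univ, Fintype.card_fin, nsmul_eq_mul]
          push_cast
          ring
  have hsqrt0 : 0 < Real.sqrt G.det := Real.sqrt_pos.2 hdet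
  have hR0 : 0 ≤ ((m:ℝ)+1) * K ^ m * α / Real.sqrt G.det := by positivity
  have hR2 : (((m:ℝ)+1) * K ^ m * α / Real.sqrt G.det) ^ 2
      = (m+1 : ℝ) ^ 2 * B * α ^ 2 := by
    rw [div_pow, Real.sq_sqrt hdet.le, hB]
    ring
  have hmain : ‖w‖ ≤ ((m:ℝ)+1) * K ^ m * α / Real.sqrt G.det := by
    calc ‖w‖ = Real.sqrt (‖w‖ ^ 2) := (Real.sqrt_sq (norm_nonneg _)).symm
      _ ≤ Real.sqrt ((((m:ℝ)+1) * K ^ m * α / Real.sqrt G.det) ^ 2) :=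
          Real.sqrt_le_sqrt (by rw [hR2]; exact hfin)
      _ = ((m:ℝ)+1) * K ^ m * α / Real.sqrt G.det := Real.sqrt_sq hR0
  have hcast : ((m+1 : ℕ) : ℝ) = (m:ℝ)+1 := by push_cast; ring
  simpa [Nat.add_sub_cancel, hcast] using hmain
end

section
/- Let w ∈ ℝ^d lie in the span of linearly independent integer vectors k_1,…,k_s ∈ ℤ^d with |k_j| ≤ K, and suppose |w·k_j| ≤ α for all j = 1,…,s. Then ‖w‖ ≤ s K^{s-1} α. -/
open scoped RealInnerProductSpace

open Matrix Finset

private lemma hadamard_posDef' {n : Type*} [LinearOrder n] [WellFoundedLT n]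
    [LocallyFiniteOrderBot n] [Fintype n] {S : Matrix n n ℝ} (hS : S.PosDef) :
    S.det ≤ ∏ i, S i i := by
  haveI : Invertible (LDL.lowerInv hS) := LDL.invertibleLowerInv hS
  have hWtri : (LDL.lowerInv hS).BlockTriangular OrderDual.toDual := fun i j hij =>
    LDL.lowerInv_triangular hS hij
  have hLtri : (LDL.lower hS).BlockTriangular OrderDual.toDual :=
    blockTriangular_inv_of_blockTriangular hWtri
  have hSLDL : LDL.lower hS * LDL.diag hS * (LDL.lower hS)ᴴ = S := LDL.lower_conj_diag hS
  -- diag entries nonneg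
  have hd : ∀ i, 0 ≤ LDL.diagEntries hS i := by
    intro i
    have h := hS.posSemidef.dotProduct_mulVec_nonneg (star (LDL.lowerInv hS i))
    simpa [LDL.diagEntries, EuclideanSpace.inner_toLp_toLp, dotProduct_comm] using h
  -- determinant
  have hdetL : (LDL.lower hS).det * (LDL.lower hS)ᴴ.det = ∏ i, (LDL.lower hS i i)^2 := by
    rw [det_conjTranspose, det_of_lowerTriangular _ hLtri]
    simp [← Finset.prod_mul_distrib, sq]
  have hdetS : S.det = (∏ i, (LDL.lower hS i i)^2) * ∏ i, LDL.diagEntries hS i := by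
    conv_lhs => rw [← hSLDL]
    rw [det_mul, det_mul, mul_right_comm, hdetL, LDL.diag, det_diagonal]
  -- diag entries of S
  have hSdiag : ∀ i, (LDL.lower hS i i)^2 * LDL.diagEntries hS i ≤ S i i := by
    intro i
    conv_rhs => rw [← hSLDL]
    have : (LDL.lower hS * LDL.diag hS * (LDL.lower hS)ᴴ) i i
        = ∑ j, (LDL.lower hS i j)^2 * LDL.diagEntries hS j := by
      simp [Matrix.mul_apply, LDL.diag, Matrix.diagonal_apply, Finset.sum_mul, sq,
        conjTranspose_apply, mul_comm, mul_assoc, mul_left_comm]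
    rw [this]
    refine Finset.single_le_sum (fun j _ => mul_nonneg (sq_nonneg _) (hd j)) (mem_univ i)
  calc S.det = ∏ i, (LDL.lower hS i i)^2 * LDL.diagEntries hS i := by
        rw [hdetS, Finset.prod_mul_distrib]
    _ ≤ ∏ i, S i i :=
        Finset.prod_le_prod (fun i _ => mul_nonneg (sq_nonneg _) (hd i)) (fun i _ => hSdiag i)

private lemma gram_dot {d m : ℕ} (v : Fin m → EuclideanSpace ℝ (Fin d)) (x : Fin m → ℝ) :
    x ⬝ᵥ ((Matrix.of fun i j => ⟪v i, v j⟫) *ᵥ x) = ⟪∑ i, x i • v i, ∑ i, x i • v i⟫ := by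
  rw [sum_inner]
  simp only [inner_sum, real_inner_smul_left, real_inner_smul_right, dotProduct,
    Matrix.mulVec, Matrix.of_apply, dotProduct, Finset.mul_sum]
  exact Finset.sum_congr rfl fun i _ => Finset.sum_congr rfl fun j _ => by ring

private lemma gram_posDef {d m : ℕ} (v : Fin m → EuclideanSpace ℝ (Fin d))
    (hv : LinearIndependent ℝ v) :
    (Matrix.of fun i j => ⟪v i, v j⟫ : Matrix (Fin m) (Fin m) ℝ).PosDef := by
  refine Matrix.PosDef.of_dotProduct_mulVec_pos ?_ ?_
  · ext i j
    simp only [Matrix.conjTranspose_apply, Matrix.of_apply, star_trivial]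
    exact real_inner_comm _ _
  · intro x hx
    have hne : ∑ i, x i • v i ≠ 0 := by
      intro h
      exact hx (funext fun i => Fintype.linearIndependent_iff.mp hv x h i)
    have hpos : (0:ℝ) < ‖∑ i, x i • v i‖ ^ 2 := pow_pos (norm_pos_iff.mpr hne) 2
    rw [← real_inner_self_eq_norm_sq] at hpos
    rw [← gram_dot v x] at hpos
    simpa using hpos

set_option maxHeartbeats 1000000 in
/-- If `w` lies in the span of linearly independent integer vectors
`k 1, …, k s` of norm at most `K`, and `|w · k j| ≤ α` for every `j`,
then `‖w‖ ≤ s K^{s-1} α`. -/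
theorem span_int_vectors_estimate
    (d s : ℕ) (hs1 : 1 ≤ s) (hsd : s ≤ d) (K : ℝ) (hK : 0 < K)
    (k : Fin s → EuclideanSpace ℝ (Fin d))
    (hint : ∀ j i, ∃ n : ℤ, k j i = n)
    (hind : LinearIndependent ℝ k)
    (hKbound : ∀ j, ‖k j‖ ≤ K)
    (w : EuclideanSpace ℝ (Fin d))
    (hw : w ∈ Submodule.span ℝ (Set.range k))
    (α : ℝ)
    (hα : ∀ j, |⟪w, k j⟫| ≤ α) :
    ‖w‖ ≤ s * K ^ (s - 1) * α := by
  haveI : NeZero s := ⟨by omega⟩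
  obtain ⟨c, hc⟩ := (Submodule.mem_span_range_iff_exists_fun ℝ).mp hw
  set G : Matrix (Fin s) (Fin s) ℝ := Matrix.of fun i j => ⟪k i, k j⟫ with hGdef
  have hGpos : G.PosDef := gram_posDef k hind
  -- determinant at least 1 by integrality
  have hdet1 : (1:ℝ) ≤ G.det := by
    choose f hf using hint
    have hGmap : G = (Matrix.of fun a b => ∑ i, f a i * f b i : Matrix (Fin s) (Fin s) ℤ).map
        (Int.cast : ℤ → ℝ) := by
      ext a b
      simp [hGdef, Matrix.map_apply, PiLp.inner_apply, RCLike.inner_apply, hf, mul_comm]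
    have hdet_eq : G.det = (((Matrix.of fun a b => ∑ i, f a i * f b i :
        Matrix (Fin s) (Fin s) ℤ)).det : ℝ) := by
      rw [hGmap]
      exact ((Int.castRingHom ℝ).map_det _).symm
    have h0 : (0:ℝ) < G.det := hGpos.det_pos
    rw [hdet_eq] at h0 ⊢
    exact_mod_cast Int.cast_pos.mp h0
  have hα0 : 0 ≤ α := le_trans (abs_nonneg _) (hα ⟨0, hs1⟩)
  have hKp : (0:ℝ) < K ^ (s-1) := pow_pos hK _
  -- coefficient bound
  have hcb : ∀ j, |c j| ≤ ‖w‖ * K ^ (s-1) := by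
    intro j
    by_cases hcj : c j = 0
    · rw [hcj, abs_zero]
      exact mul_nonneg (norm_nonneg w) hKp.le
    -- the modified family
    set v : Fin s → EuclideanSpace ℝ (Fin d) := Function.update k j w with hvdef
    have hsplit : ∀ t : Fin s → ℝ,
        ∑ a, t a • v a = t j • w + ∑ a ∈ univ.erase j, t a • k a := by
      intro t
      rw [← Finset.add_sum_erase _ _ (mem_univ j)]
      congr 1
      · simp [hvdef]
      · exact Finset.sum_congr rfl fun a ha => by
          rw [hvdef, Function.update_of_ne (Finset.ne_of_mem_erase ha)]
    have hvind : LinearIndependent ℝ v := by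
      rw [Fintype.linearIndependent_iff]
      intro t ht
      have hsum : ∑ p, ((if p = j then 0 else t p) + t j * c p) • k p = 0 := by
        have e1 : ∑ p, ((if p = j then 0 else t p) + t j * c p) • k p
            = (∑ p, (if p = j then (0:ℝ) else t p) • k p) + t j • w := by
          simp_rw [add_smul, Finset.sum_add_distrib]
          congr 1
          rw [← hc, Finset.smul_sum]
          exact Finset.sum_congr rfl fun p _ => by rw [mul_smul]
        have e2 : ∑ p, (if p = j then (0:ℝ) else t p) • k p
            = ∑ a ∈ univ.erase j, t a • k a := by
          rw [← Finset.sum_erase (f := fun p => (if p = j then (0:ℝ) else t p) • k p)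
            (a := j) univ (by simp)]
          exact Finset.sum_congr rfl fun a ha => by
            rw [if_neg (Finset.ne_of_mem_erase ha)]
        rw [e1, e2, add_comm, ← hsplit t]
        exact ht
      have hz := Fintype.linearIndependent_iff.mp hind _ hsum
      have htj : t j = 0 := by
        have h := hz j
        have h' : t j * c j = 0 := by simpa using h
        exact (mul_eq_zero.mp h').resolve_right hcj
      intro i
      by_cases hi : i = j
      · rw [hi]; exact htj
      · have := hz i
        simp only [if_neg hi, htj, zero_mul, add_zero] at this
        exact this
    -- Gram matrix of v and its determinant identity
    set M : Matrix (Fin s) (Fin s) ℝ := (1 : Matrix (Fin s) (Fin s) ℝ).updateCol j c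
      with hMdef
    have hdetM : M.det = c j := by
      rw [hMdef, ← Matrix.cramer_apply, Matrix.cramer_one]
      rfl
    have hvcomb : ∀ a, v a = ∑ p, M p a • k p := by
      intro a
      by_cases ha : a = j
      · rw [hvdef, ha, Function.update_self, ← hc]
        exact Finset.sum_congr rfl fun p _ => by
          rw [show M p j = c p by simp [hMdef, Matrix.updateCol_apply]]
      · rw [hvdef, Function.update_of_ne ha]
        have : ∀ p, M p a = (1 : Matrix (Fin s) (Fin s) ℝ) p a := fun p => by
          simp [hMdef, Matrix.updateCol_apply, ha]
        simp only [this, Matrix.one_apply, ite_smul, one_smul, zero_smul]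
        rw [Finset.sum_ite_eq' univ a k]
        simp
    have hG' : (Matrix.of fun a b => ⟪v a, v b⟫ : Matrix (Fin s) (Fin s) ℝ)
        = Mᵀ * G * M := by
      ext a b
      show ⟪v a, v b⟫ = (Mᵀ * G * M) a b
      rw [hvcomb a, hvcomb b, sum_inner]
      simp only [inner_sum, real_inner_smul_left, real_inner_smul_right]
      simp only [Matrix.mul_apply, Matrix.transpose_apply, Finset.sum_mul, Finset.mul_sum,
        hGdef, Matrix.of_apply]
      rw [Finset.sum_comm]
      exact Finset.sum_congr rfl fun p _ => Finset.sum_congr rfl fun q _ => by ring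
    have hdetG' : (Matrix.of fun a b => ⟪v a, v b⟫ : Matrix (Fin s) (Fin s) ℝ).det
        = (c j)^2 * G.det := by
      rw [hG', det_mul, det_mul, det_transpose, hdetM]; ring
    have hGv : (Matrix.of fun a b => ⟪v a, v b⟫ : Matrix (Fin s) (Fin s) ℝ).PosDef :=
      gram_posDef v hvind
    haveI : WellFoundedLT (Fin s) := inferInstance
    have hHad : (Matrix.of fun a b => ⟪v a, v b⟫ : Matrix (Fin s) (Fin s) ℝ).det
        ≤ ∏ a, (Matrix.of fun a b => ⟪v a, v b⟫ : Matrix (Fin s) (Fin s) ℝ) a a := by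
      have h := hadamard_posDef' (n := Fin s) hGv
      convert h using 2
    have hprod : ∏ a, (Matrix.of fun a b => ⟪v a, v b⟫ : Matrix (Fin s) (Fin s) ℝ) a a
        ≤ ‖w‖^2 * (K ^ (s-1))^2 := by
      have hdiag : ∀ a, (Matrix.of fun a b => ⟪v a, v b⟫ : Matrix (Fin s) (Fin s) ℝ) a a
          = ‖v a‖^2 := fun a => by
        show ⟪v a, v a⟫ = ‖v a‖^2
        exact real_inner_self_eq_norm_sq _
      calc ∏ a, (Matrix.of fun a b => ⟪v a, v b⟫ : Matrix (Fin s) (Fin s) ℝ) a a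
          = ∏ a, ‖v a‖^2 := Finset.prod_congr rfl fun a _ => hdiag a
        _ = ‖w‖^2 * ∏ a ∈ univ.erase j, ‖k a‖^2 := by
            rw [← Finset.mul_prod_erase _ _ (mem_univ j)]
            congr 1
            · simp [hvdef]
            · exact Finset.prod_congr rfl fun a ha => by
                rw [hvdef, Function.update_of_ne (Finset.ne_of_mem_erase ha)]
        _ ≤ ‖w‖^2 * ∏ a ∈ univ.erase j, K^2 := by
            apply mul_le_mul_of_nonneg_left _ (sq_nonneg _)
            exact Finset.prod_le_prod (fun a _ => sq_nonneg _)
              (fun a _ => pow_le_pow_left₀ (norm_nonneg _) (hKbound a) 2)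
        _ = ‖w‖^2 * (K ^ (s-1))^2 := by
            rw [Finset.prod_const, Finset.card_erase_of_mem (mem_univ j), card_univ,
              Fintype.card_fin, ← pow_mul, ← pow_mul, Nat.mul_comm]
    have hsq : (c j)^2 ≤ (‖w‖ * K ^ (s-1))^2 := by
      have h1 : (c j)^2 * 1 ≤ (c j)^2 * G.det :=
        mul_le_mul_of_nonneg_left hdet1 (sq_nonneg _)
      rw [mul_one] at h1
      calc (c j)^2 ≤ (c j)^2 * G.det := h1
        _ ≤ ‖w‖^2 * (K ^ (s-1))^2 := by rw [← hdetG']; exact le_trans hHad hprod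
        _ = (‖w‖ * K ^ (s-1))^2 := by ring
    have hb0 : 0 ≤ ‖w‖ * K ^ (s-1) := mul_nonneg (norm_nonneg w) hKp.le
    nlinarith [abs_nonneg (c j), sq_abs (c j)]
  -- final assembly
  have hw2 : ‖w‖^2 ≤ (s * K^(s-1) * α) * ‖w‖ := by
    have hiden : ‖w‖^2 = ∑ j, c j * ⟪w, k j⟫ := by
      rw [← real_inner_self_eq_norm_sq]
      conv_lhs => rw [← hc]
      rw [sum_inner]
      exact Finset.sum_congr rfl fun j _ => by
        rw [real_inner_smul_left, hc, real_inner_comm]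
    calc ‖w‖^2 = ∑ j, c j * ⟪w, k j⟫ := hiden
      _ ≤ ∑ j, (‖w‖ * K^(s-1)) * α := by
          apply Finset.sum_le_sum
          intro j _
          calc c j * ⟪w, k j⟫ ≤ |c j * ⟪w, k j⟫| := le_abs_self _
            _ = |c j| * |⟪w, k j⟫| := abs_mul _ _
            _ ≤ (‖w‖ * K^(s-1)) * α :=
                mul_le_mul (hcb j) (hα j) (abs_nonneg _)
                  (mul_nonneg (norm_nonneg w) hKp.le)
      _ = (s * K^(s-1) * α) * ‖w‖ := by
          rw [Finset.sum_const, card_univ, Fintype.card_fin, nsmul_eq_mul]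
          ring
  rcases eq_or_lt_of_le (norm_nonneg w) with h0 | h0
  · rw [← h0]
    have : (0:ℝ) ≤ s := Nat.cast_nonneg s
    positivity
  · nlinarith [hw2]
end

section
/- Let M ⊆ ℤ^d be a module of dimension s ≥ 1 and suppose p, p' ∈ ℝ^d satisfy p − p' ∈ span_ℝ M, and that there exist linearly independent vectors k_1,…,k_s ∈ M with |k_j| ≤ K such that |p·k_j| ≤ C ε^{δ_s} and |p'·k_j'| ≤ C ε^{δ_s} for some (possibly different) linearly independent k_1',…,k_s' ∈ M with |k_j'| ≤ K. Then |p − p'| ≤ 2 s K^{s-1} C ε^{δ_s}. -/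
open scoped RealInnerProductSpace

private noncomputable def gs {d m : ℕ} (u : Fin m → EuclideanSpace ℝ (Fin d)) :
    Fin m → EuclideanSpace ℝ (Fin d) :=
  @InnerProductSpace.gramSchmidt ℝ _ _ _ _ (Fin m) _ _ Finite.to_wellFoundedLT u

private lemma gs_orth {d m : ℕ} (u : Fin m → EuclideanSpace ℝ (Fin d)) {a b : Fin m} (h : a ≠ b) :
    ⟪gs u a, gs u b⟫ = 0 :=
  @InnerProductSpace.gramSchmidt_orthogonal ℝ _ _ _ _ (Fin m) _ _ Finite.to_wellFoundedLT u a b h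

private lemma gs_def'' {d m : ℕ} (u : Fin m → EuclideanSpace ℝ (Fin d)) (n : Fin m) :
    u n = gs u n + ∑ i ∈ Finset.Iio n, (⟪gs u i, u n⟫ / (‖gs u i‖ : ℝ) ^ 2) • gs u i :=
  @InnerProductSpace.gramSchmidt_def'' ℝ _ _ _ _ (Fin m) _ _ Finite.to_wellFoundedLT u n

/-- coefficient matrix -/
private noncomputable def Tmat {d m : ℕ} (u : Fin m → EuclideanSpace ℝ (Fin d)) :
    Matrix (Fin m) (Fin m) ℝ :=
  Matrix.of fun n j => if n = j then (1:ℝ) else if j < n then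
      ⟪gs u j, u n⟫ / ‖gs u j‖ ^ 2 else 0

private lemma gs_decomp {d m : ℕ} (u : Fin m → EuclideanSpace ℝ (Fin d)) (n : Fin m) :
    u n = ∑ j, Tmat u n j • gs u j := by
  rw [gs_def'' u n,
    ← Finset.sum_subset (Finset.subset_univ (insert n (Finset.Iio n)))
      (by intro j _ hj
          simp only [Finset.mem_insert, Finset.mem_Iio, not_or, not_lt] at hj
          have hz : Tmat u n j = 0 := by
            unfold Tmat
            rw [Matrix.of_apply, if_neg (fun h => hj.1 h.symm), if_neg (not_lt.mpr hj.2)]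
          rw [hz, zero_smul]),
    Finset.sum_insert (by simp)]
  rw [show Tmat u n n = 1 by simp [Tmat], one_smul]
  congr 1
  apply Finset.sum_congr rfl
  intro j hj
  have hjn : j < n := Finset.mem_Iio.mp hj
  rw [show Tmat u n j = ⟪gs u j, u n⟫ / ‖gs u j‖ ^ 2 by simp [Tmat, hjn, hjn.ne']]

private lemma gs_inv_tri {d m : ℕ} (u : Fin m → EuclideanSpace ℝ (Fin d)) {i j : Fin m}
    (h : i < j) : ⟪gs u j, u i⟫ = 0 :=
  @InnerProductSpace.gramSchmidt_inv_triangular ℝ _ _ _ _ (Fin m) _ _ Finite.to_wellFoundedLT u i j h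

private lemma gs_ne_zero {d m : ℕ} {u : Fin m → EuclideanSpace ℝ (Fin d)}
    (h : LinearIndependent ℝ u) (n : Fin m) : gs u n ≠ 0 :=
  @InnerProductSpace.gramSchmidt_ne_zero ℝ _ _ _ _ (Fin m) _ _ Finite.to_wellFoundedLT u n h

private lemma gs_mem_span {d m : ℕ} (u : Fin m → EuclideanSpace ℝ (Fin d)) {j i : Fin m}
    (h : i ≤ j) : gs u i ∈ Submodule.span ℝ (u '' Set.Iic j) :=
  @InnerProductSpace.gramSchmidt_mem_span ℝ _ _ _ _ (Fin m) _ _ Finite.to_wellFoundedLT u j i h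

/-- Gram matrix -/
private noncomputable def Gmat {d m : ℕ} (u : Fin m → EuclideanSpace ℝ (Fin d)) :
    Matrix (Fin m) (Fin m) ℝ :=
  Matrix.of fun i j => ⟪u i, u j⟫

private lemma gram_eq {d m : ℕ} (u : Fin m → EuclideanSpace ℝ (Fin d)) :
    Gmat u = Tmat u * Matrix.diagonal (fun j => ‖gs u j‖ ^ 2) * (Tmat u).transpose := by
  ext i k
  rw [Matrix.mul_apply]
  simp only [Matrix.mul_diagonal, Matrix.transpose_apply]
  have : (Gmat u) i k = ⟪u i, u k⟫ := rfl
  rw [this]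
  conv_lhs => rw [gs_decomp u i, gs_decomp u k]
  rw [sum_inner]
  apply Finset.sum_congr rfl
  intro j _
  rw [real_inner_smul_left, inner_sum]
  rw [Finset.sum_eq_single j]
  · rw [real_inner_smul_right, real_inner_self_eq_norm_sq]
    ring
  · intro l _ hl
    rw [real_inner_smul_right, gs_orth u (Ne.symm hl), mul_zero]
  · intro h; exact absurd (Finset.mem_univ j) h

private lemma det_T {d m : ℕ} (u : Fin m → EuclideanSpace ℝ (Fin d)) : (Tmat u).det = 1 := by
  have ht : (Tmat u).BlockTriangular OrderDual.toDual := by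
    intro i j h
    have hij : i < j := h
    have h1 : ¬ i = j := hij.ne
    have h2 : ¬ j < i := not_lt.mpr hij.le
    simp only [Tmat, Matrix.of_apply, if_neg h1, if_neg h2]
  rw [Matrix.det_of_lowerTriangular _ ht]
  have : ∀ i, Tmat u i i = 1 := fun i => by simp [Tmat]
  simp [this]

private lemma gram_det {d m : ℕ} (u : Fin m → EuclideanSpace ℝ (Fin d)) :
    (Gmat u).det = ∏ j, ‖gs u j‖ ^ 2 := by
  rw [gram_eq]
  simp [Matrix.det_mul, Matrix.det_transpose, det_T, Matrix.det_diagonal]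

private lemma gs_norm_le {d m : ℕ} (u : Fin m → EuclideanSpace ℝ (Fin d)) (j : Fin m) :
    ‖gs u j‖ ≤ ‖u j‖ := by
  have h := gs_def'' u j
  set r := ∑ i ∈ Finset.Iio j, (⟪gs u i, u j⟫ / (‖gs u i‖ : ℝ) ^ 2) • gs u i with hr
  have horth : ⟪gs u j, r⟫ = 0 := by
    rw [hr, inner_sum]
    apply Finset.sum_eq_zero
    intro i hi
    rw [real_inner_smul_right, gs_orth u (Finset.mem_Iio.mp hi).ne', mul_zero]
  have hsq : ‖u j‖ ^ 2 = ‖gs u j‖ ^ 2 + ‖r‖ ^ 2 := by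
    rw [h, norm_add_sq_real, horth]
    ring
  have h1 : ‖gs u j‖ ^ 2 ≤ ‖u j‖ ^ 2 := by nlinarith [sq_nonneg ‖r‖]
  nlinarith [norm_nonneg (gs u j), norm_nonneg (u j)]

private lemma gram_det_ge_one {d m : ℕ} {u : Fin m → EuclideanSpace ℝ (Fin d)}
    (hint : ∀ j, ∃ v : Fin d → ℤ, u j = fun i => (v i : ℝ))
    (hind : LinearIndependent ℝ u) : 1 ≤ (Gmat u).det := by
  choose v hv using hint
  set N : Matrix (Fin m) (Fin m) ℤ := Matrix.of fun i j => ∑ x, v i x * v j x with hN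
  have hGN : Gmat u = N.map (Int.castRingHom ℝ) := by
    ext i j
    simp only [Gmat, Matrix.of_apply, Matrix.map_apply, hN]
    simp only [PiLp.inner_apply, hv i, hv j]
    simp only [PiLp.inner_apply, RCLike.inner_apply, conj_trivial, Int.coe_castRingHom]
    push_cast
    exact Finset.sum_congr rfl fun x _ => mul_comm _ _
  have hdet : (Gmat u).det = ((N.det : ℤ) : ℝ) := by
    rw [hGN, ← RingHom.mapMatrix_apply, ← RingHom.map_det]
    simp
  have hpos : 0 < (Gmat u).det := by
    rw [gram_det]
    apply Finset.prod_pos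
    intro j _
    exact pow_pos (norm_pos_iff.mpr (gs_ne_zero hind j)) 2
  rw [hdet] at hpos ⊢
  have h0 : 0 < N.det := by exact_mod_cast hpos
  have h1 : 1 ≤ N.det := by omega
  exact_mod_cast h1

private lemma dual_last {d n : ℕ} {K : ℝ} (hK : 1 ≤ K)
    (u : Fin (n+1) → EuclideanSpace ℝ (Fin d))
    (hint : ∀ j, ∃ v : Fin d → ℤ, u j = fun i => (v i : ℝ))
    (hind : LinearIndependent ℝ u) (huK : ∀ j, ‖u j‖ ≤ K) :
    ∃ e : EuclideanSpace ℝ (Fin d), e ∈ Submodule.span ℝ (Set.range u) ∧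
      ⟪e, u (Fin.last n)⟫ = 1 ∧ (∀ i, i ≠ Fin.last n → ⟪e, u i⟫ = 0) ∧ ‖e‖ ≤ K ^ n := by
  have hK0 : (0:ℝ) < K := lt_of_lt_of_le one_pos hK
  set L := Fin.last n with hL
  set g := gs u with hg
  have hne : g L ≠ 0 := gs_ne_zero hind L
  have hgpos : (0:ℝ) < ‖g L‖ := norm_pos_iff.mpr hne
  -- lower bound on ‖g L‖
  have hprod : 1 ≤ ∏ j, ‖g j‖ ^ 2 := by
    rw [← gram_det u]; exact gram_det_ge_one hint hind
  have hsplit : ∏ j, ‖g j‖ ^ 2 = ‖g L‖ ^ 2 * ∏ j ∈ Finset.univ.erase L, ‖g j‖ ^ 2 :=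
    (Finset.mul_prod_erase Finset.univ _ (Finset.mem_univ L)).symm
  have hrest : ∏ j ∈ Finset.univ.erase L, ‖g j‖ ^ 2 ≤ (K ^ n) ^ 2 := by
    have hcard : (Finset.univ.erase L).card = n := by
      rw [Finset.card_erase_of_mem (Finset.mem_univ L), Finset.card_univ, Fintype.card_fin]
      omega
    calc ∏ j ∈ Finset.univ.erase L, ‖g j‖ ^ 2
        ≤ ∏ _j ∈ Finset.univ.erase L, K ^ 2 := by
          apply Finset.prod_le_prod
          · intro j _; positivity
          · intro j _
            have h1 : ‖g j‖ ≤ K := le_trans (gs_norm_le u j) (huK j)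
            nlinarith [norm_nonneg (g j)]
      _ = (K ^ n) ^ 2 := by rw [Finset.prod_const, hcard]; ring
  have hlow : 1 ≤ K ^ n * ‖g L‖ := by
    have h2 : 1 ≤ (K ^ n * ‖g L‖) ^ 2 := by
      calc (1:ℝ) ≤ ∏ j, ‖g j‖ ^ 2 := hprod
        _ = ‖g L‖ ^ 2 * ∏ j ∈ Finset.univ.erase L, ‖g j‖ ^ 2 := hsplit
        _ ≤ ‖g L‖ ^ 2 * (K ^ n) ^ 2 := by
            apply mul_le_mul_of_nonneg_left hrest (by positivity)
        _ = (K ^ n * ‖g L‖) ^ 2 := by ring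
    nlinarith [mul_nonneg (le_of_lt (pow_pos hK0 n)) (le_of_lt hgpos)]
  refine ⟨(‖g L‖ ^ 2)⁻¹ • g L, ?_, ?_, ?_, ?_⟩
  · apply Submodule.smul_mem
    have h1 : g L ∈ Submodule.span ℝ (u '' Set.Iic L) := gs_mem_span u le_rfl
    exact Submodule.span_mono (Set.image_subset_range u _) h1
  · rw [real_inner_smul_left]
    have h1 : ⟪g L, u L⟫ = ‖g L‖ ^ 2 := by
      conv_lhs => rw [gs_def'' u L]
      rw [inner_add_right, real_inner_self_eq_norm_sq, inner_sum]
      rw [Finset.sum_eq_zero, add_zero]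
      intro i hi
      rw [real_inner_smul_right, gs_orth u (Finset.mem_Iio.mp hi).ne', mul_zero]
    rw [h1, inv_mul_cancel₀ (by positivity)]
  · intro i hi
    have hilt : i < L := Fin.lt_last_iff_ne_last.mpr hi
    rw [real_inner_smul_left, gs_inv_tri u hilt, mul_zero]
  · rw [norm_smul]
    have h1 : ‖(‖g L‖ ^ 2)⁻¹‖ = (‖g L‖ ^ 2)⁻¹ := by
      rw [Real.norm_eq_abs, abs_of_pos (by positivity)]
    rw [h1]
    have h2 : (‖g L‖ ^ 2)⁻¹ * ‖g L‖ = ‖g L‖⁻¹ := by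
      field_simp
    rw [h2]
    rw [inv_le_comm₀ hgpos (by positivity)]
    calc (K ^ n)⁻¹ = 1 / K ^ n := by rw [one_div]
      _ ≤ ‖g L‖ := by
          rw [div_le_iff₀ (by positivity)]
          linarith [hlow]

private lemma proj_bound {d s : ℕ} (hs : 1 ≤ s) {K a : ℝ} (hK : 1 ≤ K) (ha : 0 ≤ a)
    (u : Fin s → EuclideanSpace ℝ (Fin d))
    (hint : ∀ j, ∃ v : Fin d → ℤ, u j = fun i => (v i : ℝ))
    (hind : LinearIndependent ℝ u) (huK : ∀ j, ‖u j‖ ≤ K)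
    (w : EuclideanSpace ℝ (Fin d)) (hw : w ∈ Submodule.span ℝ (Set.range u))
    (hres : ∀ j, |⟪w, u j⟫| ≤ a) :
    ‖w‖ ≤ s * K ^ (s - 1) * a := by
  obtain ⟨n, rfl⟩ : ∃ n, s = n + 1 := ⟨s - 1, by omega⟩
  have hdual : ∀ j : Fin (n+1), ∃ e, e ∈ Submodule.span ℝ (Set.range u) ∧
      ⟪e, u j⟫ = 1 ∧ (∀ i, i ≠ j → ⟪e, u i⟫ = 0) ∧ ‖e‖ ≤ K ^ n := by
    intro j
    set σ : Equiv.Perm (Fin (n+1)) := Equiv.swap j (Fin.last n) with hσ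
    obtain ⟨e, he1, he2, he3, he4⟩ := dual_last hK (u ∘ σ) (fun i => hint _)
      (hind.comp σ σ.injective) (fun i => huK _)
    have hrange : Set.range (u ∘ σ) = Set.range u := by
      rw [Set.range_comp, σ.surjective.range_eq, Set.image_univ]
    refine ⟨e, by rwa [hrange] at he1, ?_, ?_, he4⟩
    · have hlast : (u ∘ σ) (Fin.last n) = u j := by
        simp [hσ, Function.comp, Equiv.swap_apply_right]
      rwa [hlast] at he2
    · intro i hij
      have h1 : σ⁻¹ i ≠ Fin.last n := by
        intro h
        apply hij
        have h2 : σ (σ⁻¹ i) = σ (Fin.last n) := congrArg σ h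
        rw [Equiv.Perm.inv_def, Equiv.apply_symm_apply, hσ, Equiv.swap_apply_right j (Fin.last n)] at h2
        exact h2
      have h2 := he3 (σ⁻¹ i) h1
      simpa [Function.comp, Equiv.Perm.inv_def] using h2
  choose e he1 he2 he3 he4 using hdual
  -- w equals the dual expansion
  have hwz : w = ∑ j, ⟪w, u j⟫ • e j := by
    set z := w - ∑ j, ⟪w, u j⟫ • e j with hz
    have hzmem : z ∈ Submodule.span ℝ (Set.range u) :=
      Submodule.sub_mem _ hw (Submodule.sum_mem _ fun j _ => Submodule.smul_mem _ _ (he1 j))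
    have hzinner : ∀ i, ⟪z, u i⟫ = 0 := by
      intro i
      rw [hz, inner_sub_left, sum_inner]
      rw [Finset.sum_eq_single i]
      · rw [real_inner_smul_left, he2 i, mul_one, sub_self]
      · intro j _ hji
        rw [real_inner_smul_left, he3 j i (Ne.symm hji), mul_zero]
      · intro h; exact absurd (Finset.mem_univ i) h
    have hallz : ∀ y ∈ Submodule.span ℝ (Set.range u), ⟪z, y⟫ = 0 := by
      intro y hy
      induction hy using Submodule.span_induction with
      | mem x hx =>
          obtain ⟨i, rfl⟩ := hx
          exact hzinner i
      | zero => exact inner_zero_right z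
      | add x y _ _ hx hy => rw [inner_add_right, hx, hy, add_zero]
      | smul c x _ hx => rw [real_inner_smul_right, hx, mul_zero]
    have : ⟪z, z⟫ = 0 := hallz z hzmem
    have hz0 : z = 0 := by
      rwa [inner_self_eq_zero] at this
    rw [← sub_eq_zero]
    exact hz0
  calc ‖w‖ = ‖∑ j, ⟪w, u j⟫ • e j‖ := by rw [← hwz]
    _ ≤ ∑ j, ‖⟪w, u j⟫ • e j‖ := norm_sum_le _ _
    _ ≤ ∑ _j : Fin (n+1), a * K ^ n := by
        apply Finset.sum_le_sum
        intro j _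
        rw [norm_smul, Real.norm_eq_abs]
        exact mul_le_mul (hres j) (he4 j) (norm_nonneg _)  ha
    _ = (n+1) * (a * K ^ n) := by rw [Finset.sum_const, Finset.card_univ, Fintype.card_fin]; simp
    _ = ((n+1) : ℕ) * K ^ ((n+1) - 1) * a := by rw [Nat.add_sub_cancel]; push_cast; ring

/-- If `p` and `p'` differ by a vector of `span_ℝ M`, for a module
`M ⊆ ℤ^d` of dimension `s ≥ 1`, and both are resonant at level `C ε^{δ_s}`
with `s` linearly independent vectors of `M` of norm at most `K`, then
`|p − p'| ≤ 2 s K^{s-1} C ε^{δ_s}`. -/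
theorem extended_blocks_close_to_blocks
    (d s : ℕ) (hs : 1 ≤ s) (K C ε δs : ℝ) (hK : 1 ≤ K) (hC : 0 < C)
    (hε : 0 < ε)
    (M : Set (Fin d → ℤ))
    (hM : ∀ v : Fin d → ℤ,
      ((WithLp.toLp 2 (fun i => (v i : ℝ)) : EuclideanSpace ℝ (Fin d)) ∈ Submodule.span ℝ
        ((fun (m : Fin d → ℤ) => (WithLp.toLp 2 (fun i => (m i : ℝ)) :
          EuclideanSpace ℝ (Fin d))) '' M)) → v ∈ M)
    (hdim : Module.finrank ℝ (Submodule.span ℝ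
      ((fun (m : Fin d → ℤ) => (WithLp.toLp 2 (fun i => (m i : ℝ)) :
        EuclideanSpace ℝ (Fin d))) '' M)) = s)
    (p p' : EuclideanSpace ℝ (Fin d))
    (hdiff : p - p' ∈ Submodule.span ℝ
      ((fun (m : Fin d → ℤ) => (WithLp.toLp 2 (fun i => (m i : ℝ)) :
        EuclideanSpace ℝ (Fin d))) '' M))
    (k k' : Fin s → EuclideanSpace ℝ (Fin d))
    (hkM : ∀ j, k j ∈ (fun (m : Fin d → ℤ) => (WithLp.toLp 2 (fun i => (m i : ℝ)) :
      EuclideanSpace ℝ (Fin d))) '' M)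
    (hk'M : ∀ j, k' j ∈ (fun (m : Fin d → ℤ) => (WithLp.toLp 2 (fun i => (m i : ℝ)) :
      EuclideanSpace ℝ (Fin d))) '' M)
    (hkind : LinearIndependent ℝ k) (hk'ind : LinearIndependent ℝ k')
    (hkK : ∀ j, ‖k j‖ ≤ K) (hk'K : ∀ j, ‖k' j‖ ≤ K)
    (hres : ∀ j, |⟪p, k j⟫| ≤ C * ε ^ δs)
    (hres' : ∀ j, |⟪p', k' j⟫| ≤ C * ε ^ δs) :
    ‖p - p'‖ ≤ 2 * s * K ^ (s - 1) * C * ε ^ δs := by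
  set V : Submodule ℝ (EuclideanSpace ℝ (Fin d)) := Submodule.span ℝ
      ((fun (m : Fin d → ℤ) => (WithLp.toLp 2 (fun i => (m i : ℝ)) :
        EuclideanSpace ℝ (Fin d))) '' M) with hV
  set a : ℝ := C * ε ^ δs with haa
  have ha : 0 ≤ a := by
    have := Real.rpow_pos_of_pos hε δs
    positivity
  have hkV : Submodule.span ℝ (Set.range k) = V := by
    apply Submodule.eq_of_le_of_finrank_le
    · rw [Submodule.span_le]
      rintro x ⟨j, rfl⟩
      exact Submodule.subset_span (hkM j)
    · have h2 : Module.finrank ℝ (Submodule.span ℝ (Set.range k)) = s := by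
        rw [finrank_span_eq_card hkind, Fintype.card_fin]
      exact le_of_eq (hdim.trans h2.symm)
  have hk'V : Submodule.span ℝ (Set.range k') = V := by
    apply Submodule.eq_of_le_of_finrank_le
    · rw [Submodule.span_le]
      rintro x ⟨j, rfl⟩
      exact Submodule.subset_span (hk'M j)
    · have h2 : Module.finrank ℝ (Submodule.span ℝ (Set.range k')) = s := by
        rw [finrank_span_eq_card hk'ind, Fintype.card_fin]
      exact le_of_eq (hdim.trans h2.symm)
  have hproj_diff : (V.orthogonalProjection p : EuclideanSpace ℝ (Fin d)) -
      (V.orthogonalProjection p' : EuclideanSpace ℝ (Fin d)) = p - p' := by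
    have h1 : ((V.orthogonalProjection (p - p') : V) : EuclideanSpace ℝ (Fin d)) = p - p' :=
      Submodule.starProjection_eq_self_iff.mpr hdiff
    rw [← h1, map_sub]
    rfl
  have hinner : ∀ (q : EuclideanSpace ℝ (Fin d)) (x : EuclideanSpace ℝ (Fin d)), x ∈ V →
      ⟪(V.orthogonalProjection q : EuclideanSpace ℝ (Fin d)), x⟫ = ⟪q, x⟫ := by
    intro q x hx
    have h1 : q - V.orthogonalProjection q ∈ Vᗮ := Submodule.sub_starProjection_mem_orthogonal q
    have h2 : ⟪q - (V.orthogonalProjection q : EuclideanSpace ℝ (Fin d)), x⟫ = 0 :=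
      (Submodule.mem_orthogonal' V _).mp h1 x hx
    rw [inner_sub_left] at h2
    linarith
  have hb1 : ‖(V.orthogonalProjection p : EuclideanSpace ℝ (Fin d))‖ ≤ s * K ^ (s-1) * a := by
    apply proj_bound hs hK ha k
      (fun j => by obtain ⟨v, _, hv⟩ := hkM j; exact ⟨v, by rw [← hv]⟩) hkind hkK
    · rw [hkV]
      exact SetLike.coe_mem _
    · intro j
      rw [hinner p (k j) (Submodule.subset_span (hkM j))]
      exact hres j
  have hb2 : ‖(V.orthogonalProjection p' : EuclideanSpace ℝ (Fin d))‖ ≤ s * K ^ (s-1) * a := by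
    apply proj_bound hs hK ha k'
      (fun j => by obtain ⟨v, _, hv⟩ := hk'M j; exact ⟨v, by rw [← hv]⟩) hk'ind hk'K
    · rw [hk'V]
      exact SetLike.coe_mem _
    · intro j
      rw [hinner p' (k' j) (Submodule.subset_span (hk'M j))]
      exact hres' j
  calc ‖p - p'‖ = ‖(V.orthogonalProjection p : EuclideanSpace ℝ (Fin d)) -
        (V.orthogonalProjection p' : EuclideanSpace ℝ (Fin d))‖ := by rw [hproj_diff]
    _ ≤ ‖(V.orthogonalProjection p : EuclideanSpace ℝ (Fin d))‖ +
        ‖(V.orthogonalProjection p' : EuclideanSpace ℝ (Fin d))‖ := norm_sub_le _ _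
    _ ≤ s * K ^ (s-1) * a + s * K ^ (s-1) * a := add_le_add hb1 hb2
    _ = 2 * s * K ^ (s-1) * C * ε ^ δs := by rw [haa]; ring
end

section
/- Let M ⊆ ℤ^d be a module of dimension s and suppose w ∈ span_ℝ M satisfies: there exist linearly independent k_1,…,k_s ∈ M ∩ ℤ^d with |k_j| ≤ K and |w·k_j| ≤ C_j ε^{δ_j} for all j, where the constants are ordered so that C_j ε^{δ_j} ≤ C_s ε^{δ_s}. Then ‖w‖ ≤ s K^{s-1} C_s ε^{δ_s}. -/
open scoped RealInnerProductSpace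

open Finset

open InnerProductSpace

instance myWF (n : ℕ) : WellFoundedLT (Fin n) :=
  (inferInstance : @WellFoundedLT (Fin n) instLTFin)

variable {E : Type*} [NormedAddCommGroup E] [InnerProductSpace ℝ E]

lemma inner_gs_self {n : ℕ} (v : Fin n → E) (i : Fin n) :
    ⟪gramSchmidt ℝ v i, v i⟫ = ‖gramSchmidt ℝ v i‖ ^ 2 := by
  have h : ⟪gramSchmidt ℝ v i, v i⟫ =
      ⟪gramSchmidt ℝ v i, gramSchmidt ℝ v i⟫ +
      ∑ j ∈ Iio i, (⟪gramSchmidt ℝ v j, v i⟫ / (‖gramSchmidt ℝ v j‖ : ℝ) ^ 2) *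
        ⟪gramSchmidt ℝ v i, gramSchmidt ℝ v j⟫ := by
    conv_lhs => rw [gramSchmidt_def'' ℝ v i]
    simp [inner_add_right, inner_sum, inner_smul_right]
  rw [h, real_inner_self_eq_norm_sq, Finset.sum_eq_zero, add_zero]
  intro j hj
  rw [gramSchmidt_orthogonal ℝ v (Finset.mem_Iio.mp hj).ne', mul_zero]

lemma norm_gs_le {n : ℕ} (v : Fin n → E) (i : Fin n) :
    ‖gramSchmidt ℝ v i‖ ≤ ‖v i‖ := by
  rcases eq_or_ne (gramSchmidt ℝ v i) 0 with h | h
  · rw [h, norm_zero]; exact norm_nonneg _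
  · have h1 := inner_gs_self v i
    have h2 := real_inner_le_norm (gramSchmidt ℝ v i) (v i)
    have h3 : 0 < ‖gramSchmidt ℝ v i‖ := norm_pos_iff.mpr h
    nlinarith

lemma gram_det_eq_prod_gs {n : ℕ} (v : Fin n → E) :
    (Matrix.of fun a b : Fin n => (⟪v a, v b⟫ : ℝ)).det
      = ∏ i, ‖gramSchmidt ℝ v i‖ ^ 2 := by
  classical
  set g : Fin n → E := gramSchmidt ℝ v with hg
  set U : Matrix (Fin n) (Fin n) ℝ := Matrix.of fun a i =>
    if i = a then 1 else if i < a then ⟪g i, v a⟫ / (‖g i‖ : ℝ) ^ 2 else 0 with hU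
  have hva : ∀ a, v a = ∑ i, U a i • g i := by
    intro a
    conv_lhs => rw [gramSchmidt_def'' ℝ v a]
    rw [← Finset.add_sum_erase _ _ (Finset.mem_univ a)]
    have hUa : U a a = 1 := by simp [hU]
    rw [hUa, one_smul]
    congr 1
    rw [show Finset.Iio a = (Finset.univ.erase a).filter (· < a) by
      ext i; simp [Finset.mem_erase, Finset.mem_filter, Finset.mem_Iio]
      intro h; exact ne_of_lt h]
    rw [Finset.sum_filter]
    apply Finset.sum_congr rfl
    intro i hi
    have hia : i ≠ a := (Finset.mem_erase.mp hi).1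
    by_cases h : i < a
    · simp [hU, h, hia, hg]
    · simp [hU, h, hia]
  have hinner : ∀ a i, ⟪v a, g i⟫ = U a i * ‖g i‖ ^ 2 := by
    intro a i
    rw [hva a, sum_inner]
    rw [Finset.sum_eq_single i]
    · rw [real_inner_smul_left, real_inner_self_eq_norm_sq]
    · intro j _ hji
      rw [real_inner_smul_left, gramSchmidt_orthogonal ℝ v hji, mul_zero]
    · intro h; exact absurd (Finset.mem_univ i) h
  have key : (Matrix.of fun a b : Fin n => (⟪v a, v b⟫ : ℝ))
      = U * Matrix.diagonal (fun i => ‖g i‖ ^ 2) * U.transpose := by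
    ext a b
    rw [Matrix.mul_apply]
    simp only [Matrix.mul_diagonal, Matrix.transpose_apply, Matrix.of_apply]
    conv_lhs => rw [show (⟪v a, v b⟫ : ℝ) = ∑ i, U b i * ⟪v a, g i⟫ by
      conv_lhs => rw [hva b]
      rw [inner_sum]
      exact Finset.sum_congr rfl fun i _ => real_inner_smul_right _ _ _]
    apply Finset.sum_congr rfl
    intro i _
    rw [hinner a i]; ring
  rw [key, Matrix.det_mul, Matrix.det_mul, Matrix.det_transpose, Matrix.det_diagonal]
  have hUtri : U.BlockTriangular OrderDual.toDual := by
    intro a i hai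
    have : a < i := hai
    simp [hU, this.ne, not_lt.mpr this.le, this.ne']
  rw [Matrix.det_of_lowerTriangular U hUtri]
  simp [hU]

set_option maxHeartbeats 1000000 in
/-- If `w ∈ span_ℝ M` for a module `M ⊆ ℤ^d` of dimension `s`, and there are
linearly independent `k_1,…,k_s ∈ M` with `|k_j| ≤ K` and
`|w·k_j| ≤ C_j ε^{δ_j}`, where `C_j ε^{δ_j} ≤ C_s ε^{δ_s}` for all `j`, then
`‖w‖ ≤ s K^{s-1} C_s ε^{δ_s}`. -/
theorem projection_bound_in_resonant_zone
    (d s : ℕ) (hs : 1 ≤ s) (K ε : ℝ) (hK : 1 ≤ K) (hε : 0 < ε)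
    (C : ℕ → ℝ) (δ : ℕ → ℝ)
    (M : Set (Fin d → ℤ))
    (hdim : Module.finrank ℝ (Submodule.span ℝ
      ((fun (m : Fin d → ℤ) => (WithLp.toLp 2 (fun i => (m i : ℝ)) :
        EuclideanSpace ℝ (Fin d))) '' M)) = s)
    (w : EuclideanSpace ℝ (Fin d))
    (hw : w ∈ Submodule.span ℝ
      ((fun (m : Fin d → ℤ) => (WithLp.toLp 2 (fun i => (m i : ℝ)) :
        EuclideanSpace ℝ (Fin d))) '' M))
    (k : Fin s → EuclideanSpace ℝ (Fin d))
    (hkM : ∀ j, k j ∈ (fun (m : Fin d → ℤ) => (WithLp.toLp 2 (fun i => (m i : ℝ)) :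
      EuclideanSpace ℝ (Fin d))) '' M)
    (hkind : LinearIndependent ℝ k)
    (hkK : ∀ j, ‖k j‖ ≤ K)
    (hres : ∀ j : Fin s, |⟪w, k j⟫| ≤ C (j + 1) * ε ^ δ (j + 1))
    (hord : ∀ j : Fin s, C (j + 1) * ε ^ δ (j + 1) ≤ C s * ε ^ δ s) :
    ‖w‖ ≤ s * K ^ (s - 1) * C s * ε ^ δ s := by
  classical
  have hK0 : (0:ℝ) < K := lt_of_lt_of_le zero_lt_one hK
  have hKp : (0:ℝ) < K ^ (s - 1) := pow_pos hK0 _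
  have hB0 : 0 ≤ C s * ε ^ δ s :=
    le_trans (abs_nonneg _) ((hres ⟨0, hs⟩).trans (hord ⟨0, hs⟩))
  have hbound : ∀ j, |⟪w, k j⟫| ≤ C s * ε ^ δ s := fun j => (hres j).trans (hord j)
  -- `w` lies in the span of the `k j`
  have hfr : Module.finrank ℝ (Submodule.span ℝ (Set.range k)) = s := by
    rw [finrank_span_eq_card hkind, Fintype.card_fin]
  have hspan : Submodule.span ℝ (Set.range k) = Submodule.span ℝ
      ((fun (m : Fin d → ℤ) => (WithLp.toLp 2 (fun i => (m i : ℝ)) :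
        EuclideanSpace ℝ (Fin d))) '' M) := by
    apply Submodule.eq_of_le_of_finrank_le
    · rw [Submodule.span_le]
      rintro x ⟨j, rfl⟩
      exact Submodule.subset_span (hkM j)
    · exact hdim.le.trans hfr.ge
  have hw' : w ∈ Submodule.span ℝ (Set.range k) := by rw [hspan]; exact hw
  obtain ⟨a, ha⟩ := (Submodule.mem_span_range_iff_exists_fun ℝ).mp hw'
  choose N hNM hNk using hkM
  -- construction of dual vectors
  have hdual : ∀ j : Fin s, ∃ u : EuclideanSpace ℝ (Fin d),
      (∀ i, ⟪u, k i⟫ = if i = j then 1 else 0) ∧ ‖u‖ ≤ K ^ (s - 1) := by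
    intro j
    obtain ⟨t, hle_t⟩ : ∃ t : Fin s, ∀ x : Fin s, x ≤ t := by
      refine ⟨⟨s - 1, Nat.sub_lt (Nat.lt_of_lt_of_le Nat.zero_lt_one hs) Nat.zero_lt_one⟩, fun x => ?_⟩
      have hx := x.isLt
      rw [Fin.le_def]
      show x.1 ≤ s - 1
      exact Nat.le_pred_of_lt hx
    set σ : Equiv.Perm (Fin s) := Equiv.swap j t with hσ
    set v : Fin s → EuclideanSpace ℝ (Fin d) := k ∘ σ with hv
    have hvind : LinearIndependent ℝ v := hkind.comp σ σ.injective
    have hg0 : ∀ i, gramSchmidt ℝ v i ≠ 0 := fun i => gramSchmidt_ne_zero i hvind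
    have hgpos : ∀ i, 0 < ‖gramSchmidt ℝ v i‖ := fun i => norm_pos_iff.mpr (hg0 i)
    have hgK : ∀ i, ‖gramSchmidt ℝ v i‖ ≤ K := fun i => (norm_gs_le v i).trans (hkK (σ i))
    -- determinant identity and integrality
    have hdet1 : (1:ℝ) ≤ ∏ i, ‖gramSchmidt ℝ v i‖ ^ 2 := by
      set Gz : Matrix (Fin s) (Fin s) ℤ :=
        Matrix.of fun p q => ∑ i, N (σ p) i * N (σ q) i with hGz
      have hmap : (Matrix.of fun p q : Fin s => (⟪v p, v q⟫ : ℝ))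
          = Gz.map (Int.cast : ℤ → ℝ) := by
        ext p q
        simp only [Matrix.map_apply, Matrix.of_apply, hGz]
        rw [show v p = k (σ p) from rfl, show v q = k (σ q) from rfl,
          ← hNk (σ p), ← hNk (σ q)]
        simp only [PiLp.inner_apply, RCLike.inner_apply, conj_trivial]
        push_cast
        exact Finset.sum_congr rfl fun x _ => mul_comm _ _
      have e1 : (Matrix.of fun p q : Fin s => (⟪v p, v q⟫ : ℝ)).det
          = ((Gz.det : ℤ) : ℝ) := by
        rw [hmap]
        have h := (Int.castRingHom ℝ).map_det Gz
        rw [RingHom.mapMatrix_apply, Int.coe_castRingHom] at h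
        exact h.symm
      have e2 := gram_det_eq_prod_gs v
      have hpos : 0 < ∏ i, ‖gramSchmidt ℝ v i‖ ^ 2 :=
        Finset.prod_pos fun i _ => pow_pos (hgpos i) 2
      have hz : (0:ℝ) < ((Gz.det : ℤ) : ℝ) := by rw [← e1, e2]; exact hpos
      have hz0 : (0:ℤ) < Gz.det := by exact_mod_cast hz
      have hz1 : (1:ℤ) ≤ Gz.det := hz0
      calc (1:ℝ) ≤ ((Gz.det : ℤ) : ℝ) := by exact_mod_cast hz1
        _ = ∏ i, ‖gramSchmidt ℝ v i‖ ^ 2 := by rw [← e1, e2]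
    have hgt : (1:ℝ) ≤ K ^ (s - 1) * ‖gramSchmidt ℝ v t‖ := by
      have h1 : ∏ i ∈ Finset.univ.erase t, ‖gramSchmidt ℝ v i‖ ^ 2
          ≤ ∏ _i ∈ Finset.univ.erase t, K ^ 2 :=
        Finset.prod_le_prod (fun i _ => sq_nonneg _)
          (fun i _ => by nlinarith [hgpos i, hgK i])
      have hcard : (Finset.univ.erase t).card = s - 1 := by
        rw [Finset.card_erase_of_mem (Finset.mem_univ t), Finset.card_univ, Fintype.card_fin]
      have h2 : ∏ _i ∈ Finset.univ.erase t, K ^ 2 = (K ^ (s-1)) ^ 2 := by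
        rw [Finset.prod_const, hcard, ← pow_mul, ← pow_mul, Nat.mul_comm]
      have h4 : (∏ x ∈ Finset.univ.erase t, ‖gramSchmidt ℝ v x‖ ^ 2)
          * ‖gramSchmidt ℝ v t‖ ^ 2 = ∏ x, ‖gramSchmidt ℝ v x‖ ^ 2 :=
        Finset.prod_erase_mul Finset.univ _ (Finset.mem_univ t)
      have h3 : (1:ℝ) ≤ (K ^ (s-1) * ‖gramSchmidt ℝ v t‖) ^ 2 := by
        rw [mul_pow]
        nlinarith [hdet1, h1, h2, h4, sq_nonneg (‖gramSchmidt ℝ v t‖)]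
      nlinarith [h3, mul_pos hKp (hgpos t)]
    refine ⟨(‖gramSchmidt ℝ v t‖ ^ 2)⁻¹ • gramSchmidt ℝ v t, ?_, ?_⟩
    · intro i
      rcases eq_or_ne i j with rfl | hij
      · rw [if_pos rfl]
        have hki : k i = v t := by
          rw [hv]; simp only [Function.comp_apply, hσ, Equiv.swap_apply_right]
        rw [hki, real_inner_smul_left, inner_gs_self]
        exact inv_mul_cancel₀ (ne_of_gt (pow_pos (hgpos t) 2))
      · rw [if_neg hij]
        have hσi : σ i < t := by
          refine lt_of_le_of_ne (hle_t _) ?_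
          intro h
          apply hij
          have h2 : σ i = σ j := by rw [h, hσ, Equiv.swap_apply_left]
          exact σ.injective h2
        have hki : k i = v (σ i) := by
          rw [hv]
          simp only [Function.comp_apply, hσ, Equiv.swap_apply_self]
        rw [hki, real_inner_smul_left, gramSchmidt_inv_triangular ℝ v hσi, mul_zero]
    · have hgtpos := hgpos t
      rw [norm_smul, Real.norm_eq_abs, abs_of_pos (inv_pos.mpr (pow_pos hgtpos 2))]
      have hEq : (‖gramSchmidt ℝ v t‖ ^ 2)⁻¹ * ‖gramSchmidt ℝ v t‖
          = ‖gramSchmidt ℝ v t‖⁻¹ := by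
        rw [sq, mul_inv, mul_assoc, inv_mul_cancel₀ (ne_of_gt hgtpos), mul_one]
      rw [hEq]
      have hinv : ‖gramSchmidt ℝ v t‖ * ‖gramSchmidt ℝ v t‖⁻¹ = 1 :=
        mul_inv_cancel₀ (ne_of_gt hgtpos)
      nlinarith [hgt, hgtpos, hinv, inv_pos.mpr hgtpos, hKp]
  choose u hu hunorm using hdual
  have haj : ∀ j, |a j| ≤ K ^ (s - 1) * ‖w‖ := by
    intro j
    have huw : ⟪u j, w⟫ = a j := by
      rw [← ha, inner_sum]
      have hterm : ∀ i ∈ Finset.univ, ⟪u j, a i • k i⟫ = if i = j then a i else 0 := by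
        intro i _
        rw [real_inner_smul_right, hu j i]
        by_cases h : i = j <;> simp [h]
      rw [Finset.sum_congr rfl hterm, Finset.sum_ite_eq' Finset.univ j a]
      simp
    calc |a j| = |⟪u j, w⟫| := by rw [huw]
      _ ≤ ‖u j‖ * ‖w‖ := abs_real_inner_le_norm _ _
      _ ≤ K ^ (s-1) * ‖w‖ := mul_le_mul_of_nonneg_right (hunorm j) (norm_nonneg w)
  have hw2 : ‖w‖ ^ 2 ≤ s * (K ^ (s-1) * ‖w‖ * (C s * ε ^ δ s)) := by
    have h1 : ‖w‖ ^ 2 = ∑ j, a j * ⟪w, k j⟫ := by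
      calc ‖w‖ ^ 2 = ⟪w, w⟫ := (real_inner_self_eq_norm_sq w).symm
        _ = ⟪w, ∑ j, a j • k j⟫ := by rw [ha]
        _ = ∑ j, a j * ⟪w, k j⟫ := by
            rw [inner_sum]
            exact Finset.sum_congr rfl fun j _ => real_inner_smul_right _ _ _
    rw [h1]
    calc ∑ j, a j * ⟪w, k j⟫ ≤ ∑ j, |a j| * |⟪w, k j⟫| := by
          refine Finset.sum_le_sum fun j _ => ?_
          calc a j * ⟪w, k j⟫ ≤ |a j * ⟪w, k j⟫| := le_abs_self _
            _ = |a j| * |⟪w, k j⟫| := abs_mul _ _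
      _ ≤ ∑ _j : Fin s, (K ^ (s-1) * ‖w‖) * (C s * ε ^ δ s) := by
          refine Finset.sum_le_sum fun j _ => ?_
          exact mul_le_mul (haj j) (hbound j) (abs_nonneg _)
            (mul_nonneg hKp.le (norm_nonneg w))
      _ = s * (K ^ (s-1) * ‖w‖ * (C s * ε ^ δ s)) := by
          rw [Finset.sum_const, Finset.card_univ, Fintype.card_fin, nsmul_eq_mul, mul_assoc]
  have hspos : (0:ℝ) < s := by
    have : 0 < s := hs
    exact_mod_cast this
  rcases eq_or_lt_of_le (norm_nonneg w) with h0 | h0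
  · rw [← h0]
    nlinarith [mul_nonneg (mul_nonneg hspos.le hKp.le) hB0]
  · nlinarith [hw2, h0, mul_pos (mul_pos hspos hKp) h0]
end
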